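/- Suppose (x, τ) is a solution of the threshold delay differential equation on [0,∞), and suppose dL/γ ≤ x(t) ≤ dU/γ for all t ∈ [−r, 0]. Then dL/γ ≤ x(t) ≤ dU/γ for all t ≥ 0. -/

import Mathlib

/-- Positive invariance of the interval `[dL/γ, dU/γ]` (with
`dL = β (v0/vU) e^{-μ a/v0} g0` and `dU = β gU vU / v0`) for solutions of the threshold
delay differential equation. -/
theorem threshold_dde_positive_invariance
    (β μ γ a v0 vU g0 gU : ℝ)
    (hβ : 0 < β) (hμ : 0 < μ) (hγ : 0 < γ) (ha : 0 < a)
    (hv0 : 0 < v0) (hv0U : v0 ≤ vU) (hg0 : 0 < g0) (hg0U : g0 ≤ gU)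
    (v g : ℝ → ℝ) (hv : Continuous v) (hg : Continuous g)
    (hvb : ∀ y, v0 ≤ v y ∧ v y ≤ vU) (hgb : ∀ y, g0 ≤ g y ∧ g y ≤ gU)
    (x τ : ℝ → ℝ) (hx : Continuous x)
    (hτpos : ∀ t, 0 ≤ t → 0 < τ t)
    (hthr : ∀ t, 0 ≤ t → (∫ s in (t - τ t)..t, v (x s)) = a)
    (hode : ∀ t, 0 ≤ t →
      HasDerivAt x
        (β * Real.exp (-μ * τ t) * (v (x t) / v (x (t - τ t))) * g (x (t - τ t))
          - γ * x t) t)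
    (hinit : ∀ t ∈ Set.Icc (-(a / v0)) 0,
      β * (v0 / vU) * Real.exp (-μ * (a / v0)) * g0 / γ ≤ x t ∧
      x t ≤ β * gU * vU / v0 / γ) :
    ∀ t, 0 ≤ t →
      β * (v0 / vU) * Real.exp (-μ * (a / v0)) * g0 / γ ≤ x t ∧
      x t ≤ β * gU * vU / v0 / γ := by
  set dL := β * (v0 / vU) * Real.exp (-μ * (a / v0)) * g0 with hdL
  set dU := β * gU * vU / v0 with hdU
  have hvU : 0 < vU := lt_of_lt_of_le hv0 hv0U
  -- bound on the delay
  have hτle : ∀ t, 0 ≤ t → τ t ≤ a / v0 := by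
    intro t ht
    have hτ := hτpos t ht
    have hle : t - τ t ≤ t := by linarith
    have h1 : (∫ s in (t - τ t)..t, v0) ≤ ∫ s in (t - τ t)..t, v (x s) := by
      apply intervalIntegral.integral_mono_on hle intervalIntegrable_const
        ((hv.comp hx).intervalIntegrable _ _)
      intro s _; exact (hvb (x s)).1
    rw [hthr t ht, intervalIntegral.integral_const] at h1
    have h2 : τ t * v0 ≤ a := by
      simpa [smul_eq_mul, sub_sub_cancel] using h1
    exact (le_div_iff₀ hv0).2 h2
  -- bounds on the production term
  set P : ℝ → ℝ := fun t =>
    β * Real.exp (-μ * τ t) * (v (x t) / v (x (t - τ t))) * g (x (t - τ t)) with hP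
  have hPlb : ∀ t, 0 ≤ t → dL ≤ P t := by
    intro t ht
    have hτ := hτpos t ht
    have hτa := hτle t ht
    have hv1 := hvb (x t)
    have hv2 := hvb (x (t - τ t))
    have hg2 := hgb (x (t - τ t))
    have hvpos : 0 < v (x (t - τ t)) := lt_of_lt_of_le hv0 hv2.1
    calc dL = β * Real.exp (-μ * (a / v0)) * (v0 / vU) * g0 := by ring
      _ ≤ P t := by
          have hvt : 0 < v (x t) := lt_of_lt_of_le hv0 hv1.1
          apply mul_le_mul _ hg2.1 hg0.le
            (mul_nonneg (mul_nonneg hβ.le (Real.exp_pos _).le)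
              (div_nonneg hvt.le hvpos.le))
          apply mul_le_mul _ (div_le_div₀ hvt.le hv1.1 hvpos hv2.2)
            (by positivity) (mul_nonneg hβ.le (Real.exp_pos _).le)
          exact mul_le_mul_of_nonneg_left (Real.exp_le_exp.2 (by nlinarith)) hβ.le
  have hPub : ∀ t, 0 ≤ t → P t ≤ dU := by
    intro t ht
    have hτ := hτpos t ht
    have hv1 := hvb (x t)
    have hv2 := hvb (x (t - τ t))
    have hg2 := hgb (x (t - τ t))
    calc P t ≤ β * 1 * (vU / v0) * gU := by
          have hvpos : 0 < v (x (t - τ t)) := lt_of_lt_of_le hv0 hv2.1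
          have hvt : 0 < v (x t) := lt_of_lt_of_le hv0 hv1.1
          apply mul_le_mul _ hg2.2 (le_trans hg0.le hg2.1) (by positivity)
          apply mul_le_mul _ (div_le_div₀ hvU.le hv1.2 hv0 hv2.1)
            (div_nonneg hvt.le hvpos.le) (by positivity)
          exact mul_le_mul_of_nonneg_left
            (Real.exp_le_one_iff.2 (by nlinarith)) hβ.le
      _ = dU := by rw [hdU]; field_simp
  -- auxiliary function derivative
  have hderiv : ∀ c : ℝ, ∀ t : ℝ, 0 ≤ t →
      HasDerivAt (fun s => Real.exp (γ * s) * (x s - c))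
        (Real.exp (γ * t) * (P t - γ * c)) t := by
    intro c t ht
    have h1 : HasDerivAt (fun s => Real.exp (γ * s)) (γ * Real.exp (γ * t)) t := by
      simpa [mul_comm] using ((hasDerivAt_id t).const_mul γ).exp
    have h2 : HasDerivAt (fun s => x s - c) (P t - γ * x t) t :=
      (hode t ht).sub_const c
    have : HasDerivAt (fun s => Real.exp (γ * s) * (x s - c))
        (γ * Real.exp (γ * t) * (x t - c) + Real.exp (γ * t) * (P t - γ * x t)) t :=
      h1.mul h2
    convert this using 1
    ring
  have hx0 := hinit 0 ⟨neg_nonpos.2 (by positivity), le_refl 0⟩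
  intro t ht
  constructor
  · -- lower bound via monotone function
    have hmono : MonotoneOn (fun s => Real.exp (γ * s) * (x s - dL / γ)) (Set.Ici 0) := by
      apply monotoneOn_of_deriv_nonneg (convex_Ici 0)
      · exact (Continuous.mul (Real.continuous_exp.comp (continuous_const.mul continuous_id)) (hx.sub continuous_const)).continuousOn
      · intro s hs
        rw [interior_Ici] at hs
        exact ((hderiv (dL / γ) s (le_of_lt hs)).differentiableAt).differentiableWithinAt
      · intro s hs
        rw [interior_Ici] at hs
        rw [(hderiv (dL / γ) s (le_of_lt hs)).deriv]
        have hPl := hPlb s (le_of_lt hs)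
        have : γ * (dL / γ) = dL := by field_simp
        rw [this]
        have h1 : 0 ≤ P s - dL := by linarith
        exact mul_nonneg (Real.exp_pos _).le h1
    have h := hmono (Set.self_mem_Ici) (Set.mem_Ici.2 ht) ht
    simp only [mul_zero, Real.exp_zero, one_mul] at h
    have hx0l : 0 ≤ x 0 - dL / γ := by linarith [hx0.1]
    have hexp : 0 < Real.exp (γ * t) := Real.exp_pos _
    nlinarith [le_trans hx0l h]
  · -- upper bound via antitone function
    have hmono : AntitoneOn (fun s => Real.exp (γ * s) * (x s - dU / γ)) (Set.Ici 0) := by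
      apply antitoneOn_of_deriv_nonpos (convex_Ici 0)
      · exact (Continuous.mul (Real.continuous_exp.comp (continuous_const.mul continuous_id)) (hx.sub continuous_const)).continuousOn
      · intro s hs
        rw [interior_Ici] at hs
        exact ((hderiv (dU / γ) s (le_of_lt hs)).differentiableAt).differentiableWithinAt
      · intro s hs
        rw [interior_Ici] at hs
        rw [(hderiv (dU / γ) s (le_of_lt hs)).deriv]
        have hPu := hPub s (le_of_lt hs)
        have heq : γ * (dU / γ) = dU := by field_simp
        rw [heq]
        have h1 : P s - dU ≤ 0 := by linarith
        exact mul_nonpos_of_nonneg_of_nonpos (Real.exp_pos _).le h1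
    have h := hmono (Set.self_mem_Ici) (Set.mem_Ici.2 ht) ht
    simp only [mul_zero, Real.exp_zero, one_mul] at h
    have hx0u : x 0 - dU / γ ≤ 0 := by linarith [hx0.2]
    have hexp : 0 < Real.exp (γ * t) := Real.exp_pos _
    nlinarith [le_trans h hx0u]
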